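/- If X ⊆ [0,1)^d, d ≥ 2, is the point set of a weak M-Latin hypercube with N = #X = M^{d-1} points, then L₂-periodic(X)² ≥ (d/(2·3^d))·N^{2(d-2)/(d-1)}. -/

import Mathlib

set_option maxHeartbeats 1000000

open Finset

private lemma sum_poly2 (p q r : ℝ) (n : ℕ) :
    ∑ s ∈ range n, (p + q*(s:ℝ) + r*(s:ℝ)^2)
      = p*n + q*((n:ℝ)*((n:ℝ)-1)/2) + r*((n:ℝ)*((n:ℝ)-1)*(2*(n:ℝ)-1)/6) := by
  induction n with
  | zero => simp
  | succ n ih =>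
    rw [Finset.sum_range_succ, ih]
    push_cast
    ring

private lemma sum_lin (c : ℝ) (n : ℕ) :
    ∑ s ∈ range n, c*(s:ℝ) = c*((n:ℝ)*((n:ℝ)-1)/2) := by
  induction n with
  | zero => simp
  | succ n ih =>
    rw [Finset.sum_range_succ, ih]
    push_cast
    ring

private lemma sum_quadc (c : ℝ) (n : ℕ) :
    ∑ s ∈ range n, c*(s:ℝ)^2 = c*((n:ℝ)*((n:ℝ)-1)*(2*(n:ℝ)-1)/6) := by
  induction n with
  | zero => simp
  | succ n ih =>
    rw [Finset.sum_range_succ, ih]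
    push_cast
    ring

private lemma ind_sum (f : ℕ → ℝ) {a M : ℕ} (h : a < M) :
    ∑ s ∈ range M, (if a < s then f s else 0)
      = ∑ s ∈ range M, f s - ∑ s ∈ range (a+1), f s := by
  have h1 : a + 1 ≤ M := h
  rw [Finset.range_eq_Ico,
    ← Finset.sum_Ico_consecutive (fun s => if a < s then f s else 0) (Nat.zero_le (a+1)) h1]
  have e0 : ∑ s ∈ Finset.Ico 0 (a+1), (if a < s then f s else 0) = 0 := by
    apply Finset.sum_eq_zero
    intro s hs
    rw [Finset.mem_Ico] at hs
    simp [Nat.not_lt.mpr (Nat.lt_succ_iff.mp hs.2)]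
  have e1 : ∑ s ∈ Finset.Ico (a+1) M, (if a < s then f s else 0)
      = ∑ s ∈ Finset.Ico (a+1) M, f s := by
    apply Finset.sum_congr rfl
    intro s hs
    rw [Finset.mem_Ico] at hs
    simp [Nat.lt_of_succ_le hs.1]
  rw [e0, e1, Finset.sum_Ico_eq_sub f h1, ← Finset.range_eq_Ico]
  ring

private noncomputable def gfun (M a s : ℕ) : ℝ :=
  ((a:ℝ) - s)/M - ((M:ℝ)-1)/(2*M) + (if a < s then 1 else 0)

private lemma gram (M a b : ℕ) (hM : 1 ≤ M) (ha : a < M) (hb : b ≤ a) :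
    (1:ℝ)/2 - (((a:ℝ) - (b:ℝ))/M) + (((a:ℝ) - (b:ℝ))/M)^2
      = 1/3 + 1/(6*(M:ℝ)^2) + (2/(M:ℝ)) * ∑ s ∈ range M, gfun M a s * gfun M b s := by
  have hm : (0:ℝ) < M := by exact_mod_cast hM
  have hm' : (M:ℝ) ≠ 0 := ne_of_gt hm
  have hba : b < M := lt_of_le_of_lt hb ha
  have hpt : ∀ s ∈ range M, gfun M a s * gfun M b s
      = ((((a:ℝ))/M - ((M:ℝ)-1)/(2*M))*(((b:ℝ))/M - ((M:ℝ)-1)/(2*M))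
          + (-((((a:ℝ))/M - ((M:ℝ)-1)/(2*M)) + (((b:ℝ))/M - ((M:ℝ)-1)/(2*M)))/M) * (s:ℝ)
          + (1/(M:ℝ)^2)*(s:ℝ)^2)
        + ((if b < s then (((a:ℝ) - s)/M - ((M:ℝ)-1)/(2*M)) else 0)
        + ((if a < s then (((b:ℝ) - s)/M - ((M:ℝ)-1)/(2*M)) else 0)
        + (if a < s then (1:ℝ) else 0))) := by
    intro s _
    unfold gfun
    by_cases h1 : a < s
    · have h2 : b < s := lt_of_le_of_lt hb h1
      simp only [if_pos h1, if_pos h2]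
      field_simp
      ring
    · by_cases h2 : b < s
      · simp only [if_neg h1, if_pos h2]
        field_simp
        ring
      · simp only [if_neg h1, if_neg h2]
        field_simp
        ring
  rw [Finset.sum_congr rfl hpt, Finset.sum_add_distrib, Finset.sum_add_distrib,
    Finset.sum_add_distrib, Finset.sum_add_distrib, Finset.sum_add_distrib,
    Finset.sum_const, Finset.card_range, sum_lin, sum_quadc, ind_sum _ hba, ind_sum _ ha,
    ind_sum (fun _ => (1:ℝ)) ha]
  have haff : ∀ (γ : ℝ) (n : ℕ), ∑ s ∈ range n, ((γ - (s:ℝ))/M - ((M:ℝ)-1)/(2*M))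
      = (γ/M - ((M:ℝ)-1)/(2*M))*(n:ℝ) - ((n:ℝ)*((n:ℝ)-1)/2)/M := by
    intro γ n
    induction n with
    | zero => simp
    | succ n ih =>
      rw [Finset.sum_range_succ, ih]
      push_cast
      field_simp
      ring
  rw [haff, haff, haff, haff, Finset.sum_const, Finset.sum_const, Finset.card_range,
    Finset.card_range]
  simp only [nsmul_eq_mul]
  push_cast
  field_simp
  ring

private noncomputable def psi (M : ℕ) : Option (Fin M) → Fin M → ℝ
  | none, _ => 1/(Real.sqrt 6 * M)
  | some s, a => Real.sqrt (2/(M:ℝ)) * gfun M a s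

private lemma psi_none (M : ℕ) (a : Fin M) : psi M none a = 1/(Real.sqrt 6 * M) := rfl
private lemma psi_some (M : ℕ) (s a : Fin M) :
    psi M (some s) a = Real.sqrt (2/(M:ℝ)) * gfun M a s := rfl

private lemma kernel_half (M : ℕ) (hM : 1 ≤ M) (a b : Fin M) (hb : (b:ℕ) ≤ (a:ℕ)) :
    (1:ℝ)/2 - |(a:ℝ)/M - (b:ℝ)/M| + |(a:ℝ)/M - (b:ℝ)/M|^2
      = 1/3 + ∑ r : Option (Fin M), psi M r a * psi M r b := by
  have hm : (0:ℝ) < M := by exact_mod_cast hM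
  have habs : |(a:ℝ)/M - (b:ℝ)/M| = ((a:ℝ) - (b:ℝ))/M := by
    rw [div_sub_div_same, abs_of_nonneg]
    apply div_nonneg _ (le_of_lt hm)
    have : (b:ℝ) ≤ (a:ℝ) := by exact_mod_cast hb
    linarith
  have hsum : ∑ r : Option (Fin M), psi M r a * psi M r b
      = 1/(6*(M:ℝ)^2) + (2/(M:ℝ)) * ∑ s ∈ Finset.range M, gfun M (a:ℕ) s * gfun M (b:ℕ) s := by
    rw [Fintype.sum_option]
    congr 1
    · rw [psi_none, psi_none, div_mul_div_comm, one_mul]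
      congr 1
      rw [mul_mul_mul_comm, Real.mul_self_sqrt (by norm_num : (0:ℝ) ≤ 6)]
      ring
    · rw [Finset.mul_sum, ← Fin.sum_univ_eq_sum_range (fun s => 2/(M:ℝ) * (gfun M (a:ℕ) s * gfun M (b:ℕ) s)) M]
      apply Finset.sum_congr rfl
      intro s _
      rw [psi_some, psi_some]
      have h2 : Real.sqrt (2/(M:ℝ)) * Real.sqrt (2/(M:ℝ)) = 2/(M:ℝ) :=
        Real.mul_self_sqrt (by positivity)
      calc Real.sqrt (2/(M:ℝ)) * gfun M (a:ℕ) s * (Real.sqrt (2/(M:ℝ)) * gfun M (b:ℕ) s)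
          = (Real.sqrt (2/(M:ℝ)) * Real.sqrt (2/(M:ℝ))) * (gfun M (a:ℕ) s * gfun M (b:ℕ) s) := by
            ring
        _ = 2/(M:ℝ) * (gfun M (a:ℕ) s * gfun M (b:ℕ) s) := by rw [h2]
  rw [habs, hsum, ← add_assoc]
  exact gram M (a:ℕ) (b:ℕ) hM a.isLt hb

private lemma kernel_eq (M : ℕ) (hM : 1 ≤ M) (a b : Fin M) :
    (1:ℝ)/2 - |(a:ℝ)/M - (b:ℝ)/M| + |(a:ℝ)/M - (b:ℝ)/M|^2
      = 1/3 + ∑ r : Option (Fin M), psi M r a * psi M r b := by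
  rcases le_total (b:ℕ) (a:ℕ) with h | h
  · exact kernel_half M hM a b h
  · rw [abs_sub_comm]
    rw [kernel_half M hM b a h]
    congr 1
    apply Finset.sum_congr rfl
    intro r _
    ring

/-- `H` is a weak `M`-Latin hypercube: every axis-parallel row of the grid
`(Fin d → Fin M)` contains exactly one point of `H`. -/
def IsWeakLatinHypercube {d M : ℕ} (H : Finset (Fin d → Fin M)) : Prop :=
  ∀ (k : Fin d) (x : Fin d → Fin M), ∃! v : Fin M, Function.update x k v ∈ H

private lemma card_latin {d M : ℕ} (hM : 1 ≤ M) (hd : 1 ≤ d)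
    (H : Finset (Fin d → Fin M)) (hH : IsWeakLatinHypercube H) :
    H.card = M^(d-1) := by
  classical
  set k : Fin d := ⟨0, hd⟩ with hk
  choose v hv hu using hH
  set F : (Fin d → Fin M) → (Fin d → Fin M) := fun x => Function.update x k (v k x) with hF
  have hmem : ∀ x ∈ (Finset.univ : Finset (Fin d → Fin M)), F x ∈ H := fun x _ => hv k x
  have hcards := Finset.card_eq_sum_card_fiberwise hmem
  have fib : ∀ y ∈ H, (Finset.univ.filter fun x => F x = y).card = M := by
    intro y hy
    have hbij : (Finset.univ.filter fun x => F x = y).card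
        = (Finset.univ : Finset (Fin M)).card := by
      apply Finset.card_bij' (fun x _ => x k) (fun w _ => Function.update y k w)
      · intro x hx
        exact Finset.mem_univ _
      · intro w _
        simp only [Finset.mem_filter, Finset.mem_univ, true_and, hF]
        rw [Function.update_idem]
        have hyH : Function.update (Function.update y k w) k (y k) ∈ H := by
          rw [Function.update_idem, Function.update_eq_self]
          exact hy
        have := hu k (Function.update y k w) (y k) hyH
        rw [← this, Function.update_eq_self]
      · intro x hx
        simp only [Finset.mem_filter, Finset.mem_univ, true_and, hF] at hx
        funext i
        by_cases hi : i = k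
        · subst hi
          simp [Function.update_self]
        · have : y i = x i := by
            rw [← hx]
            simp [Function.update_of_ne hi]
          simp [Function.update_of_ne hi, this]
      · intro w _
        simp [Function.update_self]
    rw [hbij, Finset.card_univ, Fintype.card_fin]
  have htot : M^d = H.card * M := by
    have hcu : (Finset.univ : Finset (Fin d → Fin M)).card = M^d := by
      simp [Finset.card_univ]
    rw [← hcu, hcards, Finset.sum_congr rfl fib, Finset.sum_const, smul_eq_mul]
  have hMd : M^(d-1) * M = M^d := by
    rw [← pow_succ]
    congr 1
    omega
  exact Nat.eq_of_mul_eq_mul_right (by omega) (htot.symm.trans hMd.symm)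

private noncomputable def Kk (M : ℕ) (a b : Fin M) : ℝ :=
  ∑ r : Option (Fin M), psi M r a * psi M r b

private noncomputable def Tt {d M : ℕ} (H : Finset (Fin d → Fin M))
    (s : Finset (Fin d)) : ℝ :=
  ∑ x ∈ H, ∑ y ∈ H, ∏ k ∈ s, Kk M (x k) (y k)

private lemma T_eq_sq {d M : ℕ} (H : Finset (Fin d → Fin M)) (s : Finset (Fin d)) :
    Tt H s = ∑ p ∈ Fintype.piFinset (fun _ : ↥s => (Finset.univ : Finset (Option (Fin M)))),
      (∑ x ∈ H, ∏ k : ↥s, psi M (p k) (x k)) * (∑ y ∈ H, ∏ k : ↥s, psi M (p k) (y k)) := by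
  classical
  have h1 : ∀ x y : Fin d → Fin M, ∏ k ∈ s, Kk M (x k) (y k)
      = ∑ p ∈ Fintype.piFinset (fun _ : ↥s => (Finset.univ : Finset (Option (Fin M)))),
          (∏ k : ↥s, psi M (p k) (x k)) * (∏ k : ↥s, psi M (p k) (y k)) := by
    intro x y
    rw [← Finset.prod_coe_sort s (fun k => Kk M (x k) (y k))]
    unfold Kk
    rw [Finset.prod_univ_sum]
    exact Finset.sum_congr rfl fun p _ => Finset.prod_mul_distrib
  unfold Tt
  calc ∑ x ∈ H, ∑ y ∈ H, ∏ k ∈ s, Kk M (x k) (y k)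
      = ∑ x ∈ H, ∑ y ∈ H, ∑ p ∈ Fintype.piFinset (fun _ : ↥s => (Finset.univ : Finset (Option (Fin M)))),
          (∏ k : ↥s, psi M (p k) (x k)) * (∏ k : ↥s, psi M (p k) (y k)) :=
        Finset.sum_congr rfl fun x _ => Finset.sum_congr rfl fun y _ => h1 x y
    _ = ∑ x ∈ H, ∑ p ∈ Fintype.piFinset (fun _ : ↥s => (Finset.univ : Finset (Option (Fin M)))),
          ∑ y ∈ H, (∏ k : ↥s, psi M (p k) (x k)) * (∏ k : ↥s, psi M (p k) (y k)) :=
        Finset.sum_congr rfl fun x _ => Finset.sum_comm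
    _ = ∑ p ∈ Fintype.piFinset (fun _ : ↥s => (Finset.univ : Finset (Option (Fin M)))),
          ∑ x ∈ H, ∑ y ∈ H, (∏ k : ↥s, psi M (p k) (x k)) * (∏ k : ↥s, psi M (p k) (y k)) :=
        Finset.sum_comm
    _ = _ := by
        apply Finset.sum_congr rfl
        intro p _
        rw [Finset.sum_mul_sum]

private lemma T_nonneg {d M : ℕ} (H : Finset (Fin d → Fin M)) (s : Finset (Fin d)) :
    0 ≤ Tt H s := by
  rw [T_eq_sq]
  exact Finset.sum_nonneg fun p _ => mul_self_nonneg _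

private lemma T_empty {d M : ℕ} (H : Finset (Fin d → Fin M)) :
    Tt H (∅ : Finset (Fin d)) = (H.card : ℝ)^2 := by
  unfold Tt
  simp [Finset.prod_empty, Finset.sum_const, smul_eq_mul]
  ring

private lemma T_single_ge {d M : ℕ} (hM : 1 ≤ M) (H : Finset (Fin d → Fin M)) (k : Fin d) :
    ((H.card : ℝ))^2/(6*(M:ℝ)^2) ≤ Tt H {k} := by
  have hM0 : (0:ℝ) < M := by exact_mod_cast hM
  have h1 : Tt H {k} = ∑ r : Option (Fin M),
      (∑ x ∈ H, psi M r (x k)) * (∑ y ∈ H, psi M r (y k)) := by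
    unfold Tt Kk
    simp only [Finset.prod_singleton]
    calc ∑ x ∈ H, ∑ y ∈ H, ∑ r : Option (Fin M), psi M r (x k) * psi M r (y k)
        = ∑ x ∈ H, ∑ r : Option (Fin M), ∑ y ∈ H, psi M r (x k) * psi M r (y k) :=
          Finset.sum_congr rfl fun x _ => Finset.sum_comm
      _ = ∑ r : Option (Fin M), ∑ x ∈ H, ∑ y ∈ H, psi M r (x k) * psi M r (y k) :=
          Finset.sum_comm
      _ = _ := Finset.sum_congr rfl fun r _ => by rw [Finset.sum_mul_sum]
  rw [h1]
  have h2 : ((H.card : ℝ))^2/(6*(M:ℝ)^2)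
      = (∑ x ∈ H, psi M none (x k)) * (∑ y ∈ H, psi M none (y k)) := by
    simp only [psi_none, Finset.sum_const, nsmul_eq_mul]
    have h6 : Real.sqrt 6 * Real.sqrt 6 = 6 := Real.mul_self_sqrt (by norm_num)
    have h60 : Real.sqrt 6 ≠ 0 := by
      intro h
      rw [h, zero_mul] at h6
      norm_num at h6
    have hu : (1/(Real.sqrt 6 * (M:ℝ))) * (1/(Real.sqrt 6 * (M:ℝ))) = 1/(6*(M:ℝ)^2) := by
      rw [div_mul_div_comm, one_mul]
      congr 1
      rw [mul_mul_mul_comm, h6]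
      ring
    rw [mul_mul_mul_comm, hu]
    ring
  rw [h2]
  exact Finset.single_le_sum (f := fun r => (∑ x ∈ H, psi M r (x k)) * (∑ y ∈ H, psi M r (y k)))
    (fun r _ => mul_self_nonneg _) (Finset.mem_univ none)

private lemma expand_sum {d M : ℕ} (hM : 1 ≤ M) (H : Finset (Fin d → Fin M)) :
    ∑ x ∈ H, ∑ y ∈ H, ∏ k : Fin d,
        ((1 : ℝ) / 2 - |(x k : ℝ) / M - (y k : ℝ) / M| + |(x k : ℝ) / M - (y k : ℝ) / M| ^ 2)
      = ∑ t ∈ (Finset.univ : Finset (Fin d)).powerset,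
          (1/3:ℝ)^t.card * Tt H (Finset.univ \ t) := by
  classical
  have h1 : ∀ x y : Fin d → Fin M, (∏ k : Fin d,
        ((1 : ℝ) / 2 - |(x k : ℝ) / M - (y k : ℝ) / M| + |(x k : ℝ) / M - (y k : ℝ) / M| ^ 2))
      = ∑ t ∈ (Finset.univ : Finset (Fin d)).powerset,
          (1/3:ℝ)^t.card * ∏ k ∈ Finset.univ \ t, Kk M (x k) (y k) := by
    intro x y
    rw [Finset.prod_congr rfl (fun k _ => kernel_eq M hM (x k) (y k))]
    show (∏ k : Fin d, ((1:ℝ)/3 + Kk M (x k) (y k))) = _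
    rw [Finset.prod_add (fun _ => (1:ℝ)/3) (fun k => Kk M (x k) (y k)) Finset.univ]
    apply Finset.sum_congr rfl
    intro t _
    rw [Finset.prod_const]
  calc ∑ x ∈ H, ∑ y ∈ H, ∏ k : Fin d,
        ((1 : ℝ) / 2 - |(x k : ℝ) / M - (y k : ℝ) / M| + |(x k : ℝ) / M - (y k : ℝ) / M| ^ 2)
      = ∑ x ∈ H, ∑ y ∈ H, ∑ t ∈ (Finset.univ : Finset (Fin d)).powerset,
          (1/3:ℝ)^t.card * ∏ k ∈ Finset.univ \ t, Kk M (x k) (y k) :=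
        Finset.sum_congr rfl fun x _ => Finset.sum_congr rfl fun y _ => h1 x y
    _ = ∑ x ∈ H, ∑ t ∈ (Finset.univ : Finset (Fin d)).powerset, ∑ y ∈ H,
          (1/3:ℝ)^t.card * ∏ k ∈ Finset.univ \ t, Kk M (x k) (y k) :=
        Finset.sum_congr rfl fun x _ => Finset.sum_comm
    _ = ∑ t ∈ (Finset.univ : Finset (Fin d)).powerset, ∑ x ∈ H, ∑ y ∈ H,
          (1/3:ℝ)^t.card * ∏ k ∈ Finset.univ \ t, Kk M (x k) (y k) :=
        Finset.sum_comm
    _ = _ := by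
        apply Finset.sum_congr rfl
        intro t _
        unfold Tt
        rw [Finset.mul_sum]
        apply Finset.sum_congr rfl
        intro x _
        rw [Finset.mul_sum]

theorem stmt_11 (M d : ℕ) (hM : 1 ≤ M) (hd : 2 ≤ d)
    (H : Finset (Fin d → Fin M)) (hH : IsWeakLatinHypercube H) :
    -((M : ℝ) ^ (d - 1)) ^ 2 / 3 ^ d +
        ∑ x ∈ H, ∑ y ∈ H,
          ∏ k : Fin d,
            ((1 : ℝ) / 2 - |(x k : ℝ) / M - (y k : ℝ) / M| +
              |(x k : ℝ) / M - (y k : ℝ) / M| ^ 2) ≥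
      ((d : ℝ) / (2 * 3 ^ d)) *
        ((M : ℝ) ^ (d - 1)) ^ ((2 * ((d : ℝ) - 2)) / ((d : ℝ) - 1)) := by
  classical
  have hM0 : (0:ℝ) < (M:ℝ) := by exact_mod_cast hM
  have hcard : H.card = M ^ (d - 1) := card_latin hM (by omega) H hH
  have hexp := expand_sum hM H
  set N : ℝ := (M:ℝ) ^ (d-1) with hN
  have hcardR : (H.card : ℝ) = N := by rw [hcard]; push_cast; rfl
  -- the selected family of subsets
  set 𝒮 : Finset (Finset (Fin d)) :=
    insert Finset.univ ((Finset.univ : Finset (Fin d)).image fun k => Finset.univ.erase k)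
    with h𝒮
  have hsub : 𝒮 ⊆ (Finset.univ : Finset (Fin d)).powerset :=
    fun t _ => Finset.mem_powerset.mpr (Finset.subset_univ t)
  have hge := Finset.sum_le_sum_of_subset_of_nonneg (f := fun t =>
      (1/3:ℝ)^t.card * Tt H (Finset.univ \ t)) hsub
    (fun t _ _ => mul_nonneg (by positivity) (T_nonneg H _))
  have hnotmem : Finset.univ ∉
      (Finset.univ : Finset (Fin d)).image (fun k => Finset.univ.erase k) := by
    intro hmem
    obtain ⟨k, -, hk⟩ := Finset.mem_image.mp hmem
    have hc := congrArg Finset.card hk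
    rw [Finset.card_erase_of_mem (Finset.mem_univ k), Finset.card_univ, Fintype.card_fin] at hc
    omega
  have hinj : ∀ k ∈ (Finset.univ : Finset (Fin d)), ∀ k' ∈ Finset.univ,
      Finset.univ.erase k = Finset.univ.erase k' → k = k' := by
    intro k _ k' _ h
    by_contra hne
    have hmem : k ∈ Finset.univ.erase k' := Finset.mem_erase.mpr ⟨hne, Finset.mem_univ k⟩
    rw [← h] at hmem
    exact (Finset.mem_erase.mp hmem).1 rfl
  have hsumS : ∑ t ∈ 𝒮, (1/3:ℝ)^t.card * Tt H (Finset.univ \ t)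
      = (1/3:ℝ)^d * N^2 + ∑ k : Fin d, (1/3:ℝ)^(d-1) * Tt H {k} := by
    rw [h𝒮, Finset.sum_insert hnotmem, Finset.sum_image hinj]
    congr 1
    · rw [Finset.card_univ, Fintype.card_fin, Finset.sdiff_self, T_empty, hcardR]
    · apply Finset.sum_congr rfl
      intro k _
      rw [Finset.card_erase_of_mem (Finset.mem_univ k), Finset.card_univ, Fintype.card_fin]
      congr 2
      ext i
      simp only [Finset.mem_sdiff, Finset.mem_univ, true_and, Finset.mem_erase,
        Finset.mem_singleton, not_and, not_not]
      tauto
  have hbound : ∑ k : Fin d, (1/3:ℝ)^(d-1) * Tt H {k}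
      ≥ (d:ℝ) * ((1/3:ℝ)^(d-1) * (N^2/(6*(M:ℝ)^2))) := by
    have : ∀ k ∈ (Finset.univ : Finset (Fin d)),
        (1/3:ℝ)^(d-1) * (N^2/(6*(M:ℝ)^2)) ≤ (1/3:ℝ)^(d-1) * Tt H {k} := by
      intro k _
      apply mul_le_mul_of_nonneg_left _ (by positivity)
      have := T_single_ge hM H k
      rwa [hcardR] at this
    have h := Finset.sum_le_sum this
    rw [Finset.sum_const, Finset.card_univ, Fintype.card_fin, nsmul_eq_mul] at h
    exact h
  -- arithmetic identities
  have h3d : (3:ℝ)^d = 3^(d-1)*3 := by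
    rw [← pow_succ]
    congr 1
    omega
  have hNN : N^2 = (M:ℝ)^(2*d-4) * (M:ℝ)^2 := by
    rw [hN, ← pow_mul, ← pow_add]
    congr 1
    omega
  have hC : (d:ℝ) * ((1/3:ℝ)^(d-1) * (N^2/(6*(M:ℝ)^2)))
      = ((d:ℝ)/(2*3^d)) * (M:ℝ)^(2*d-4) := by
    rw [hNN, h3d, div_pow, one_pow]
    have h3 : (3:ℝ)^(d-1) ≠ 0 := by positivity
    field_simp
    ring
  have hrpow : N ^ ((2 * ((d : ℝ) - 2)) / ((d : ℝ) - 1)) = (M:ℝ)^(2*d-4) := by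
    have hd1 : ((d:ℝ) - 1) ≠ 0 := by
      have : (2:ℝ) ≤ (d:ℝ) := by exact_mod_cast hd
      linarith
    have he : ((d-1 : ℕ) : ℝ) * ((2 * ((d : ℝ) - 2)) / ((d : ℝ) - 1)) = ((2*d-4 : ℕ) : ℝ) := by
      rw [Nat.cast_sub (by omega : 1 ≤ d), Nat.cast_sub (by omega : 4 ≤ 2*d)]
      push_cast
      field_simp
      ring
    rw [hN, ← Real.rpow_natCast (M:ℝ) (d-1), ← Real.rpow_mul (le_of_lt hM0), he,
      Real.rpow_natCast]
  rw [ge_iff_le, hexp, hrpow, ← hC, neg_div]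
  have h13 : (1/3:ℝ)^d * N^2 = N^2/3^d := by
    rw [div_pow, one_pow]
    ring
  rw [hsumS] at hge
  have hge' : (1/3:ℝ)^d * N^2 + ∑ k : Fin d, (1/3:ℝ)^(d-1) * Tt H {k}
      ≤ ∑ t ∈ (Finset.univ : Finset (Fin d)).powerset,
          (1/3:ℝ)^t.card * Tt H (Finset.univ \ t) := hge
  rw [h13] at hge'
  clear_value N
  set B := ∑ k : Fin d, (1/3:ℝ)^(d-1) * Tt H {k} with hB
  set P := ∑ t ∈ (Finset.univ : Finset (Fin d)).powerset,
      (1/3:ℝ)^t.card * Tt H (Finset.univ \ t) with hP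
  have hfin : (d:ℝ) * ((1/3:ℝ)^(d-1) * (N^2/(6*(M:ℝ)^2)))
      ≤ -(N^2/3^d) + P := by
    linarith [hge', hbound]
  exact hfin
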